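/- Fix an integer d ≥ 3, a bounded domain D ⊂ ℝ^d, ε ∈ (0,1), δ ∈ (0, 2/(d−2)], a locally finite set P ⊂ ℝ^d with at least two elements, and nonnegative reals (ρ_z)_{z∈P}. The point-process hole-partition construction satisfies: (i) every z ∈ n^ε(D) has ε^{d/(d−2)} ρ_z < ε^{1+δ}, R_{ε,z} > ε², and 2√d ε^{d/(d−2)} ρ_z < R_{ε,z}; (ii) D^ε_b ⊆ {x ∈ ℝ^d : dist(x, D) ≤ 2}; (iii) for every z ∈ n^ε(D), the ball B(εz, R_{ε,z}) is disjoint from D^ε_b. -/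
import Mathlib


open Metric Set Bornology

noncomputable section

variable (d : ℕ)

/-- `R_{ε,z} := (ε/4) min( inf_{w∈P, w≠z} |w − z| , 1 )`. -/
def Rmin (ε : ℝ) (Pts : Set (EuclideanSpace ℝ (Fin d))) (z : EuclideanSpace ℝ (Fin d)) : ℝ :=
  ε / 4 * min (infDist z (Pts \ {z})) 1

/-- `Φ^ε(D) := {z ∈ P : εz ∈ D}`. -/
def PhiEpsP (Pts D : Set (EuclideanSpace ℝ (Fin d))) (ε : ℝ) :
    Set (EuclideanSpace ℝ (Fin d)) :=
  {z ∈ Pts | ε • z ∈ D}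

/-- `J := {z ∈ Φ^ε(D) : ε^{d/(d−2)} ρ_z ≥ ε^{1+δ}}`. -/
def JbP (Pts D : Set (EuclideanSpace ℝ (Fin d))) (ε δ : ℝ)
    (ρ : EuclideanSpace ℝ (Fin d) → ℝ) : Set (EuclideanSpace ℝ (Fin d)) :=
  {z ∈ PhiEpsP d Pts D ε | ε ^ (1 + δ) ≤ ε ^ ((d : ℝ) / ((d : ℝ) - 2)) * ρ z}

/-- `K := {z ∈ Φ^ε(D) \ J : R_{ε,z} ≤ ε²}`. -/
def KbP (Pts D : Set (EuclideanSpace ℝ (Fin d))) (ε δ : ℝ)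
    (ρ : EuclideanSpace ℝ (Fin d) → ℝ) : Set (EuclideanSpace ℝ (Fin d)) :=
  {z ∈ PhiEpsP d Pts D ε \ JbP d Pts D ε δ ρ | Rmin d ε Pts z ≤ ε ^ 2}

/-- `C := {z ∈ Φ^ε(D) \ (J∪K) : 2√d ε^{d/(d−2)} ρ_z ≥ R_{ε,z}}`. -/
def CbP (Pts D : Set (EuclideanSpace ℝ (Fin d))) (ε δ : ℝ)
    (ρ : EuclideanSpace ℝ (Fin d) → ℝ) : Set (EuclideanSpace ℝ (Fin d)) :=
  {z ∈ PhiEpsP d Pts D ε \ (JbP d Pts D ε δ ρ ∪ KbP d Pts D ε δ ρ) |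
    Rmin d ε Pts z ≤ 2 * Real.sqrt d * (ε ^ ((d : ℝ) / ((d : ℝ) - 2)) * ρ z)}

/-- `H̃_b := ∪_{z ∈ J∪K∪C} B(εz, 2 min(ε^{d/(d−2)} ρ_z, 1))`. -/
def HtildeP (Pts D : Set (EuclideanSpace ℝ (Fin d))) (ε δ : ℝ)
    (ρ : EuclideanSpace ℝ (Fin d) → ℝ) : Set (EuclideanSpace ℝ (Fin d)) :=
  ⋃ z ∈ JbP d Pts D ε δ ρ ∪ KbP d Pts D ε δ ρ ∪ CbP d Pts D ε δ ρ,
    ball (ε • z) (2 * min (ε ^ ((d : ℝ) / ((d : ℝ) - 2)) * ρ z) 1)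

/-- `Ĩ := {z ∈ Φ^ε(D) \ (J∪K∪C) : H̃_b ∩ B(εz, R_{ε,z}) ≠ ∅}`. -/
def ItildeP (Pts D : Set (EuclideanSpace ℝ (Fin d))) (ε δ : ℝ)
    (ρ : EuclideanSpace ℝ (Fin d) → ℝ) : Set (EuclideanSpace ℝ (Fin d)) :=
  {z ∈ PhiEpsP d Pts D ε \ (JbP d Pts D ε δ ρ ∪ KbP d Pts D ε δ ρ ∪ CbP d Pts D ε δ ρ) |
    (HtildeP d Pts D ε δ ρ ∩ ball (ε • z) (Rmin d ε Pts z)).Nonempty}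

/-- `I_b := J∪K∪C∪Ĩ`. -/
def IbP (Pts D : Set (EuclideanSpace ℝ (Fin d))) (ε δ : ℝ)
    (ρ : EuclideanSpace ℝ (Fin d) → ℝ) : Set (EuclideanSpace ℝ (Fin d)) :=
  JbP d Pts D ε δ ρ ∪ KbP d Pts D ε δ ρ ∪ CbP d Pts D ε δ ρ ∪ ItildeP d Pts D ε δ ρ

/-- `n^ε(D) := Φ^ε(D) \ I_b`. -/
def nEpsP (Pts D : Set (EuclideanSpace ℝ (Fin d))) (ε δ : ℝ)
    (ρ : EuclideanSpace ℝ (Fin d) → ℝ) : Set (EuclideanSpace ℝ (Fin d)) :=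
  PhiEpsP d Pts D ε \ IbP d Pts D ε δ ρ

/-- `D^ε_b := ∪_{z∈I_b} B(εz, 2 min(ε^{d/(d−2)} ρ_z, 1))`. -/
def DbP (Pts D : Set (EuclideanSpace ℝ (Fin d))) (ε δ : ℝ)
    (ρ : EuclideanSpace ℝ (Fin d) → ℝ) : Set (EuclideanSpace ℝ (Fin d)) :=
  ⋃ z ∈ IbP d Pts D ε δ ρ,
    ball (ε • z) (2 * min (ε ^ ((d : ℝ) / ((d : ℝ) - 2)) * ρ z) 1)

/-- properties of the hole-partition construction for a locally finite point set. -/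
theorem hole_partition_point_process
    (hd : 3 ≤ d)
    (D : Set (EuclideanSpace ℝ (Fin d))) (hDopen : IsOpen D) (hDbdd : IsBounded D)
    (ε : ℝ) (hε : ε ∈ Set.Ioo (0 : ℝ) 1)
    (δ : ℝ) (hδ : δ ∈ Set.Ioc (0 : ℝ) (2 / ((d : ℝ) - 2)))
    (Pts : Set (EuclideanSpace ℝ (Fin d)))
    (hloc : ∀ K : Set (EuclideanSpace ℝ (Fin d)), IsCompact K → (Pts ∩ K).Finite)
    (hPts : Pts.Nontrivial)
    (ρ : EuclideanSpace ℝ (Fin d) → ℝ) (hρ : ∀ z, 0 ≤ ρ z) :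
    (∀ z ∈ nEpsP d Pts D ε δ ρ,
        ε ^ ((d : ℝ) / ((d : ℝ) - 2)) * ρ z < ε ^ (1 + δ) ∧
        ε ^ 2 < Rmin d ε Pts z ∧
        2 * Real.sqrt d * (ε ^ ((d : ℝ) / ((d : ℝ) - 2)) * ρ z) < Rmin d ε Pts z) ∧
    DbP d Pts D ε δ ρ ⊆ {x | infDist x D ≤ 2} ∧
    (∀ z ∈ nEpsP d Pts D ε δ ρ,
        ball (ε • z) (Rmin d ε Pts z) ∩ DbP d Pts D ε δ ρ = ∅) := by
  obtain ⟨hε0, hε1⟩ := hε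
  have key : ∀ z ∈ nEpsP d Pts D ε δ ρ,
      ε ^ ((d : ℝ) / ((d : ℝ) - 2)) * ρ z < ε ^ (1 + δ) ∧
      ε ^ 2 < Rmin d ε Pts z ∧
      2 * Real.sqrt d * (ε ^ ((d : ℝ) / ((d : ℝ) - 2)) * ρ z) < Rmin d ε Pts z := by
    rintro z ⟨hzΦ, hzI⟩
    simp only [IbP, Set.mem_union, not_or] at hzI
    obtain ⟨⟨⟨hJ, hK⟩, hC⟩, hI⟩ := hzI
    refine ⟨?_, ?_, ?_⟩
    · by_contra h; exact hJ ⟨hzΦ, le_of_not_gt h⟩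
    · by_contra h; exact hK ⟨⟨hzΦ, hJ⟩, le_of_not_gt h⟩
    · by_contra h
      exact hC ⟨⟨hzΦ, fun hmem => hmem.elim hJ hK⟩, le_of_not_gt h⟩
  have hIbΦ : ∀ w ∈ IbP d Pts D ε δ ρ, w ∈ PhiEpsP d Pts D ε := by
    rintro w (((hw | hw) | hw) | hw)
    exacts [hw.1, hw.1.1, hw.1.1, hw.1.1]
  have hDb : DbP d Pts D ε δ ρ ⊆ {x | infDist x D ≤ 2} := by
    rintro x hx
    simp only [DbP, Set.mem_iUnion, exists_prop] at hx
    obtain ⟨w, hw, hxball⟩ := hx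
    have hwΦ := hIbΦ w hw
    rw [mem_ball] at hxball
    have hrad : 2 * min (ε ^ ((d : ℝ) / ((d : ℝ) - 2)) * ρ w) 1 ≤ 2 := by
      have := min_le_right (ε ^ ((d : ℝ) / ((d : ℝ) - 2)) * ρ w) 1
      linarith
    exact le_trans (infDist_le_dist_of_mem hwΦ.2) (by linarith)
  refine ⟨key, hDb, ?_⟩
  intro z hz
  obtain ⟨hJlt, hεsq, hClt⟩ := key z hz
  obtain ⟨hzΦ, hzI⟩ := hz
  rw [Set.eq_empty_iff_forall_notMem]
  rintro x ⟨hxz, hxD⟩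
  rw [mem_ball] at hxz
  simp only [DbP, Set.mem_iUnion, exists_prop] at hxD
  obtain ⟨w, hw, hxw⟩ := hxD
  rw [mem_ball] at hxw
  have hzJKC : z ∉ JbP d Pts D ε δ ρ ∪ KbP d Pts D ε δ ρ ∪ CbP d Pts D ε δ ρ :=
    fun h => hzI (Or.inl h)
  rcases hw with hw | hw
  · -- w ∈ J ∪ K ∪ C : then x ∈ H̃_b, so z ∈ Ĩ, contradiction
    have hxH : x ∈ HtildeP d Pts D ε δ ρ :=
      Set.mem_biUnion hw (mem_ball.mpr hxw)
    exact hzI (Or.inr ⟨⟨hzΦ, hzJKC⟩, ⟨x, hxH, mem_ball.mpr hxz⟩⟩)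
  · -- w ∈ Ĩ : geometric contradiction
    obtain ⟨⟨hwΦ, hwJKC⟩, hwNE⟩ := hw
    have hwPts : w ∈ Pts := hwΦ.1
    have hzPts : z ∈ Pts := hzΦ.1
    have hne : z ≠ w := by
      rintro rfl
      exact hzI (Or.inr ⟨⟨hwΦ, hwJKC⟩, hwNE⟩)
    simp only [Set.mem_union, not_or] at hwJKC
    obtain ⟨⟨hwJ, hwK⟩, hwC⟩ := hwJKC
    have hwClt : 2 * Real.sqrt d * (ε ^ ((d : ℝ) / ((d : ℝ) - 2)) * ρ w)
        < Rmin d ε Pts w := by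
      by_contra h
      exact hwC ⟨⟨hwΦ, fun hmem => hmem.elim hwJ hwK⟩, le_of_not_gt h⟩
    set aw := ε ^ ((d : ℝ) / ((d : ℝ) - 2)) * ρ w with haw
    have haw0 : 0 ≤ aw := mul_nonneg (Real.rpow_nonneg hε0.le _) (hρ w)
    have hsq1 : (1 : ℝ) ≤ Real.sqrt d := by
      rw [show (1:ℝ) = Real.sqrt 1 by simp]
      exact Real.sqrt_le_sqrt (by exact_mod_cast Nat.one_le_of_lt hd)
    have h5 : 2 * min aw 1 ≤ 2 * Real.sqrt d * aw := by
      have h1 : min aw 1 ≤ aw := min_le_left _ _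
      nlinarith
    -- distance identities
    have hdeq : dist (ε • z) (ε • w) = ε * dist z w := by
      rw [dist_smul₀, Real.norm_of_nonneg hε0.le]
    have hinfz : infDist z (Pts \ {z}) ≤ dist z w :=
      infDist_le_dist_of_mem ⟨hwPts, fun h => hne (Set.mem_singleton_iff.mp h).symm⟩
    have hinfw : infDist w (Pts \ {w}) ≤ dist w z :=
      infDist_le_dist_of_mem ⟨hzPts, fun h => hne (Set.mem_singleton_iff.mp h)⟩
    have h8 : 4 * Rmin d ε Pts z ≤ ε * dist z w := by
      have hm : min (infDist z (Pts \ {z})) 1 ≤ dist z w :=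
        le_trans (min_le_left _ _) hinfz
      have := mul_le_mul_of_nonneg_left hm hε0.le
      unfold Rmin; linarith
    have h9 : 4 * Rmin d ε Pts w ≤ ε * dist z w := by
      have hm : min (infDist w (Pts \ {w})) 1 ≤ dist w z :=
        le_trans (min_le_left _ _) hinfw
      have := mul_le_mul_of_nonneg_left hm hε0.le
      rw [dist_comm w z] at this
      unfold Rmin; linarith
    have htri : dist (ε • z) (ε • w) ≤ dist x (ε • z) + dist x (ε • w) := by
      rw [dist_comm x (ε • z)]; exact dist_triangle _ _ _
    have hnn : (0 : ℝ) ≤ dist (ε • z) (ε • w) := dist_nonneg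
    rw [hdeq] at htri hnn
    linarith
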